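/- Scalar-product separation of complete polar cones in EReal^n: Let W ⊆ (EReal^n)^2 be a complete polar cone and let s, t ∈ EReal^n be such that (s,t) ∉ W. Then there exists y ∈ EReal^n such that ⨆ i, (y_i + f_i) ≤ ⨆ j, (y_j + g_j) for every (f,g) ∈ W, while ¬( ⨆ i, (y_i + s_i) ≤ ⨆ j, (y_j + t_j) ). -/

import Mathlib

open scoped Classical

noncomputable section

/-- Vectors of the semimodule `EReal^n` over the completed max-plus
semiring `EReal = ℝ ∪ {±∞}`. -/
abbrev EVec (n : ℕ) := Fin n → EReal

/-- `W ⊆ (EReal^n)² ≅ EReal^{2n}` is a complete subsemimodule (with the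
entrywise operations): it is stable under entrywise max, under the entrywise
addition of any scalar, and under arbitrary (entrywise) suprema. -/
def IsCompleteSubsemimoduleE {n : ℕ} (W : Set (EVec n × EVec n)) : Prop :=
  (∀ p ∈ W, ∀ q ∈ W, p ⊔ q ∈ W) ∧
  (∀ p ∈ W, ∀ lam : EReal,
    ((fun i => p.1 i + lam, fun i => p.2 i + lam) : EVec n × EVec n) ∈ W) ∧
  (∀ Q : Set (EVec n × EVec n), Q ⊆ W → sSup Q ∈ W)

/-- A complete pre-congruence: a complete subsemimodule of `(EReal^n)²`
containing the diagonal and transitive. -/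
def IsCompletePrecongruenceE {n : ℕ} (W : Set (EVec n × EVec n)) : Prop :=
  IsCompleteSubsemimoduleE W ∧ (∀ f : EVec n, (f, f) ∈ W) ∧
    ∀ f g h : EVec n, (f, g) ∈ W → (g, h) ∈ W → (f, h) ∈ W

/-- A complete polar cone: a complete pre-congruence such that `f ≤ g`
implies `(f,g) ∈ W`. -/
def IsCompletePolarConeE {n : ℕ} (W : Set (EVec n × EVec n)) : Prop :=
  IsCompletePrecongruenceE W ∧ ∀ f g : EVec n, f ≤ g → (f, g) ∈ W

/-- A complete congruence: a symmetric complete pre-congruence. -/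
def IsCompleteCongruenceE {n : ℕ} (W : Set (EVec n × EVec n)) : Prop :=
  IsCompletePrecongruenceE W ∧ ∀ f g : EVec n, (f, g) ∈ W → (g, f) ∈ W

/-- The entrywise supremum `ē(g) = sSup { f | (f,g) ∈ W }`. -/
def ebarE {n : ℕ} (W : Set (EVec n × EVec n)) (g : EVec n) : EVec n :=
  sSup { f : EVec n | (f, g) ∈ W }

/-- The residuation `u∖x = sSup { λ | ∀ i, u_i + λ ≤ x_i }` in `EReal`. -/
def eresE {n : ℕ} (u x : EVec n) : EReal :=
  sSup { lam : EReal | ∀ i, u i + lam ≤ x i }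

lemma ereal_add_neg_self_le (a : EReal) : a + (-a) ≤ 0 := by
  induction a using EReal.rec with
  | bot => simp
  | coe r => rw [← EReal.coe_neg, ← EReal.coe_add]; norm_num
  | top => simp

lemma ereal_real_cancel (a : EReal) (μ : ℝ) : a + (μ:EReal) + (-(μ:EReal)) = a := by
  rw [add_assoc, ← EReal.coe_neg, ← EReal.coe_add]; norm_num

lemma ereal_real_cancel' (a : EReal) (μ : ℝ) : a + (-(μ:EReal)) + (μ:EReal) = a := by
  rw [add_assoc, ← EReal.coe_neg, ← EReal.coe_add]; norm_num

lemma lem2 (a b c : EReal) (h : a ≤ b + c) : a + (-b) ≤ c := by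
  calc a + (-b) ≤ (b + c) + (-b) := add_le_add_left h _
  _ = (b + (-b)) + c := by rw [add_comm b c, add_assoc, add_comm c (b + -b)]
  _ ≤ 0 + c := add_le_add_left (ereal_add_neg_self_le b) c
  _ = c := zero_add c

lemma lem1 (a b : EReal) (μ : ℝ) (h : a + (-b) ≤ (μ:EReal)) : a ≤ b + μ := by
  induction b using EReal.rec with
  | bot =>
    rcases eq_or_ne a ⊥ with ha | ha
    · simp [ha]
    · exfalso
      rw [show (-(⊥:EReal)) = ⊤ by simp, EReal.add_top_of_ne_bot ha] at h
      exact absurd h (by simp)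
  | coe r =>
    have := add_le_add_left h (r:EReal)
    rwa [ereal_real_cancel' a r, ← EReal.coe_add, add_comm (μ:ℝ) r, EReal.coe_add] at this
  | top => rw [EReal.top_add_of_ne_bot (by simp)]; exact le_top

/-- Corollary 3.7 of the paper, specialized to the reflexive semiring `EReal`,
`X = Y = EReal^n` and the bracket `⟨y,x⟩ = ⨆ i, (y_i + x_i)`: scalar-product
separation of a point from a complete polar cone. -/
theorem scalar_separation_complete_polar_cone (n : ℕ)
    (W : Set (EVec n × EVec n)) (hW : IsCompletePolarConeE W)
    (s t : EVec n) (hst : (s, t) ∉ W) :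
    ∃ y : EVec n,
      (∀ p ∈ W, (⨆ i, y i + p.1 i) ≤ ⨆ i, y i + p.2 i) ∧
      ¬ (⨆ i, y i + s i) ≤ ⨆ i, y i + t i := by
  obtain ⟨⟨⟨hmax, hscal, hsup⟩, hdiag, htrans⟩, hcone⟩ := hW
  set v : EVec n := ebarE W t with hv
  -- (v, t) ∈ W
  have hvt : (v, t) ∈ W := by
    have hQ : {p : EVec n × EVec n | p ∈ W ∧ p.2 = t} ⊆ W := fun p hp => hp.1
    have h := hsup _ hQ
    have h1 : (sSup {p : EVec n × EVec n | p ∈ W ∧ p.2 = t}).1 = v := by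
      rw [Prod.fst_sSup, hv, ebarE]
      congr 1
      ext f
      constructor
      · rintro ⟨p, ⟨hpW, hpt⟩, rfl⟩
        rwa [show p = (p.1, t) from Prod.ext rfl hpt] at hpW
      · intro hf
        exact ⟨(f, t), ⟨hf, rfl⟩, rfl⟩
    have h2 : (sSup {p : EVec n × EVec n | p ∈ W ∧ p.2 = t}).2 = t := by
      rw [Prod.snd_sSup]
      have : Prod.snd '' {p : EVec n × EVec n | p ∈ W ∧ p.2 = t} = {t} := by
        apply Set.eq_singleton_iff_nonempty_unique_mem.mpr
        constructor
        · exact ⟨t, (t, t), ⟨hdiag t, rfl⟩, rfl⟩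
        · rintro x ⟨p, ⟨_, hpt⟩, rfl⟩; exact hpt
      rw [this, sSup_singleton]
    rwa [show (sSup {p : EVec n × EVec n | p ∈ W ∧ p.2 = t}) = (v, t) from
      Prod.ext h1 h2] at h
  -- t ≤ v
  have htv : t ≤ v := le_sSup (hdiag t)
  -- ¬ s ≤ v
  have hsv : ¬ s ≤ v := fun h => hst (htrans s v t (hcone s v h) hvt)
  obtain ⟨i₀, hi₀⟩ : ∃ i, v i < s i := by
    by_contra h
    push_neg at h
    exact hsv (fun i => not_lt.mp fun hc => absurd (h i) (not_le.mpr hc))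
  refine ⟨fun i => - v i, ?_, ?_⟩
  · -- separation on W
    rintro ⟨f, g⟩ hp
    simp only
    by_contra hcon
    push_neg at hcon
    obtain ⟨μ, hμ1, hμ2⟩ := EReal.exists_between_coe_real hcon
    refine absurd hμ2 (not_lt.mpr ?_)
    -- key: from ⨆ i, -v i + g i ≤ μ deduce ⨆ i, -v i + f i ≤ μ
    have hgle : ∀ i, g i ≤ v i + μ := by
      intro i
      apply lem1
      rw [add_comm]
      exact le_trans (le_iSup (fun i => -v i + g i) i) hμ1.le
    have h1 : (g, fun i => v i + (μ:EReal)) ∈ W := hcone _ _ hgle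
    have h2 : ((fun i => v i + (μ:EReal)), fun i => t i + (μ:EReal)) ∈ W :=
      hscal (v, t) hvt (μ:EReal)
    have h3 : (f, fun i => t i + (μ:EReal)) ∈ W :=
      htrans _ _ _ hp (htrans _ _ _ h1 h2)
    have h4 := hscal _ h3 (-(μ:EReal))
    simp only at h4
    have h5 : ((fun i => f i + -(μ:EReal)), t) ∈ W := by
      have : (fun i => (t i + (μ:EReal)) + -(μ:EReal)) = t := by
        funext i; exact ereal_real_cancel (t i) μ
      rwa [this] at h4
    have h6 : (fun i => f i + -(μ:EReal)) ≤ v := le_sSup h5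
    have h7 : ∀ i, f i ≤ v i + μ := by
      intro i
      have := add_le_add_left (h6 i) (μ:EReal)
      rwa [ereal_real_cancel' (f i) μ] at this
    exact iSup_le fun i => by rw [add_comm]; exact lem2 _ _ _ (h7 i)
  · -- strict separation of (s,t)
    apply not_le.mpr
    have ht0 : (⨆ i, -v i + t i) ≤ 0 := by
      apply iSup_le
      intro i
      calc -v i + t i ≤ -v i + v i := add_le_add_right (htv i) _
      _ = v i + -v i := add_comm _ _
      _ ≤ 0 := ereal_add_neg_self_le (v i)
    have hs0 : (0:EReal) < -v i₀ + s i₀ := by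
      rcases eq_or_ne (v i₀) ⊥ with hb | hb
      · rw [hb, show (-(⊥:EReal)) = ⊤ by simp,
          EReal.top_add_of_ne_bot (by rw [hb] at hi₀; exact (bot_lt_iff_ne_bot.mp hi₀))]
        exact (by simp : (0:EReal) < ⊤)
      · have hnt : v i₀ ≠ ⊤ := fun hc => absurd hi₀ (by simp [hc])
        lift v i₀ to ℝ using ⟨hnt, hb⟩ with r hr
        rw [← EReal.coe_neg]
        have : (r:EReal) < s i₀ := hi₀
        calc (0:EReal) = ((-r + r : ℝ) : EReal) := by norm_num
        _ = (-r:ℝ) + (r:EReal) := EReal.coe_add _ _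
        _ < (-r:ℝ) + s i₀ := EReal.add_lt_add_left_coe this (-r)
    exact lt_of_le_of_lt ht0 (lt_of_lt_of_le hs0 (le_iSup (fun i => -v i + s i) i₀))
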